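/- Let p > 2 and g(x) = p c_p |x|^p on ℝ (so g = x·V'(x) with V(x) = c_p|x|^p). There exists C > 0 such that for all real t, λ: |g(t) − g(λ) − (t−λ)g'(λ) − ((t−λ)²/2) g''(λ)| ≤ C |t−λ|³ (max(|λ|,|t|))^{p−3}. -/

import Mathlib

/-- `g(x) = p · c_p · |x|^p`, so that `g(x) = x V'(x)` with `V(x) = c_p |x|^p`. -/
noncomputable def gfun (p c : ℝ) : ℝ → ℝ := fun x => p * c * |x| ^ p

/-- derivative of `|x|^q` at `x ≠ 0`, any real `q`. -/
lemma hasDerivAt_abs_rpow_ne' {q : ℝ} {x : ℝ} (hx : x ≠ 0) :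
    HasDerivAt (fun y : ℝ => |y| ^ q) (q * |x| ^ (q - 2) * x) x := by
  rcases hx.lt_or_gt with hneg | hpos
  · have hne : -x ≠ 0 := by simpa using hx
    have h1 : HasDerivAt (fun y : ℝ => (-y) ^ q) (q * (-x) ^ (q - 1) * (-1)) x :=
      (Real.hasDerivAt_rpow_const (p := q) (Or.inl hne)).comp x (hasDerivAt_neg x)
    have h2 : (fun y : ℝ => |y| ^ q) =ᶠ[nhds x] fun y : ℝ => (-y) ^ q := by
      filter_upwards [eventually_lt_nhds hneg] with y hy
      rw [abs_of_neg hy]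
    have h3 := h1.congr_of_eventuallyEq h2
    refine h3.congr_deriv ?_
    symm
    rw [abs_of_neg hneg]
    have : (-x) ^ (q - 1) = (-x) ^ (q - 2) * (-x) := by
      rw [← Real.rpow_add_one hne]; ring_nf
    rw [this]; ring
  · have h1 : HasDerivAt (fun y : ℝ => y ^ q) (q * x ^ (q - 1)) x :=
      Real.hasDerivAt_rpow_const (Or.inl hx)
    have h2 : (fun y : ℝ => |y| ^ q) =ᶠ[nhds x] fun y : ℝ => y ^ q := by
      filter_upwards [eventually_gt_nhds hpos] with y hy
      rw [abs_of_pos hy]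
    have h3 := h1.congr_of_eventuallyEq h2
    refine h3.congr_deriv ?_
    symm
    rw [abs_of_pos hpos]
    have : x ^ (q - 1) = x ^ (q - 2) * x := by
      rw [← Real.rpow_add_one hx]; ring_nf
    rw [this]; ring

/-- derivative of `|x|^q * x` for `q > 0`, all `x`. -/
lemma hasDerivAt_abs_rpow_mul' {q : ℝ} (hq : 0 < q) (x : ℝ) :
    HasDerivAt (fun y : ℝ => |y| ^ q * y) ((q + 1) * |x| ^ q) x := by
  rcases eq_or_ne x 0 with rfl | hx
  · have key : HasDerivAt (fun y : ℝ => |y| ^ q * y) 0 0 := by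
      rw [hasDerivAt_iff_tendsto_slope]
      apply squeeze_zero_norm' (a := fun h : ℝ => |h| ^ q)
      · filter_upwards [self_mem_nhdsWithin] with y (hy : y ≠ 0)
        have hslope : slope (fun y : ℝ => |y| ^ q * y) 0 y = |y| ^ q := by
          rw [slope_def_field]; simp [mul_div_assoc, div_self hy]
        rw [hslope, Real.norm_eq_abs, abs_of_nonneg (by positivity)]
      · have h := (Real.continuousAt_rpow_const 0 q (Or.inr hq.le)).tendsto
        rw [Real.zero_rpow hq.ne'] at h
        exact (h.comp (continuous_abs.tendsto' 0 0 abs_zero)).mono_left nhdsWithin_le_nhds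
    simpa [Real.zero_rpow hq.ne'] using key
  · have h1 := (hasDerivAt_abs_rpow_ne' (q := q) hx).mul (hasDerivAt_id x)
    refine h1.congr_deriv ?_
    symm
    have hne : |x| ≠ 0 := abs_ne_zero.2 hx
    have hxx : x * x = |x| * |x| := by rcases abs_cases x with ⟨h, _⟩ | ⟨h, _⟩ <;> nlinarith [h]
    have hkey : |x| ^ (q - 2) * (x * x) = |x| ^ q := by
      rw [hxx, ← mul_assoc, ← Real.rpow_add_one hne, ← Real.rpow_add_one hne]
      ring_nf
    simp only [id_eq]
    calc (q + 1) * |x| ^ q = q * (|x| ^ (q - 2) * (x * x)) + |x| ^ q * 1 := by rw [hkey]; ring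
    _ = q * |x| ^ (q - 2) * x * x + |x| ^ q * 1 := by ring

set_option maxHeartbeats 1000000 in
/-- Improved second-order Taylor remainder bound for `g(x) = p c_p |x|^p`, `p > 2`:
there is `C > 0` such that for all real `t, λ`,
`|g(t) − g(λ) − (t−λ)g'(λ) − ((t−λ)²/2)g''(λ)| ≤ C|t−λ|³ (max(|λ|,|t|))^{p−3}`. -/
theorem stmt3 (p c : ℝ) (hp : 2 < p) (hc : 0 < c) :
    ∃ C > 0, ∀ t lam : ℝ,
      |gfun p c t - gfun p c lam - (t - lam) * deriv (gfun p c) lam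
          - (t - lam) ^ 2 / 2 * deriv (deriv (gfun p c)) lam|
        ≤ C * |t - lam| ^ 3 * (max |lam| |t|) ^ (p - 3) := by
  have hp0 : (0:ℝ) < p := by linarith
  have hp1 : (1:ℝ) < p := by linarith
  have hp2 : (0:ℝ) < p - 2 := by linarith
  have hpc : 0 < p * c := mul_pos hp0 hc
  have hpcp : 0 < p * c * p := mul_pos hpc hp0
  have hpcpp : 0 < p * c * p * (p - 1) := mul_pos hpcp (by linarith)
  -- first derivative
  have hd1 : ∀ x : ℝ, HasDerivAt (gfun p c) (p * c * (p * |x| ^ (p - 2) * x)) x := fun x =>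
    (hasDerivAt_abs_rpow x hp1).const_mul (p * c)
  have deriv1 : deriv (gfun p c) = fun x => p * c * (p * |x| ^ (p - 2) * x) :=
    funext fun x => (hd1 x).deriv
  -- second derivative
  have hd2 : ∀ x : ℝ, HasDerivAt (fun y : ℝ => p * c * (p * |y| ^ (p - 2) * y))
      (p * c * p * (p - 1) * |x| ^ (p - 2)) x := by
    intro x
    have h := (hasDerivAt_abs_rpow_mul' hp2 x).const_mul (p * c * p)
    have heq : (fun y : ℝ => p * c * (p * |y| ^ (p - 2) * y))
        = fun y : ℝ => p * c * p * (|y| ^ (p - 2) * y) := by funext y; ring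
    rw [heq]
    refine h.congr_deriv ?_; ring
  have deriv2 : deriv (fun y : ℝ => p * c * (p * |y| ^ (p - 2) * y))
      = fun x => p * c * p * (p - 1) * |x| ^ (p - 2) := funext fun x => (hd2 x).deriv
  -- third derivative away from 0
  have hd3 : ∀ x : ℝ, x ≠ 0 → HasDerivAt (fun y : ℝ => p * c * p * (p - 1) * |y| ^ (p - 2))
      (p * c * p * (p - 1) * ((p - 2) * |x| ^ (p - 4) * x)) x := by
    intro x hx
    have h := (hasDerivAt_abs_rpow_ne' (q := p - 2) hx).const_mul (p * c * p * (p - 1))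
    refine h.congr_deriv ?_
    ring_nf
  set K := p * c * p * (p - 1) * (p - 2) with hKdef
  have hK : 0 < K := mul_pos hpcpp hp2
  set A := 2 * (p * c) + 2 * (p * c * p) + 2 * (p * c * p * (p - 1)) with hAdef
  have hA : 0 < A := by rw [hAdef]; linarith
  refine ⟨8 * A + 2 * K, by linarith, ?_⟩
  intro t lam
  simp only [deriv1, deriv2]
  rcases eq_or_ne t lam with rfl | hne
  · simp
  set M := max |lam| |t| with hMdef
  have hM0 : 0 < M := by
    rcases eq_or_ne lam 0 with rfl | hl
    · have ht : t ≠ 0 := by simpa using hne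
      exact lt_max_of_lt_right (abs_pos.2 ht)
    · exact lt_max_of_lt_left (abs_pos.2 hl)
  have habs_l : |lam| ≤ M := le_max_left _ _
  have habs_t : |t| ≤ M := le_max_right _ _
  have hh0 : 0 < |t - lam| := abs_pos.2 (sub_ne_zero.2 hne)
  have hh2M : |t - lam| ≤ 2 * M := by
    have := abs_sub t lam
    linarith
  have hx3 : (0:ℝ) ≤ M ^ (p - 3) := (Real.rpow_pos_of_pos hM0 _).le
  have hh3 : (0:ℝ) ≤ |t - lam| ^ 3 := by positivity
  have hMrel2 : M ^ (p - 2) = M ^ (p - 3) * M := by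
    calc M ^ (p - 2) = M ^ ((p - 3) + 1) := by congr 1; ring
    _ = M ^ (p - 3) * M := Real.rpow_add_one hM0.ne' _
  rcases le_or_gt M (2 * |t - lam|) with hbig | hsmall
  · -- "crude" case : |t - lam| ≥ M/2
    have r2 : |lam| ^ (p - 2) ≤ M ^ (p - 2) := Real.rpow_le_rpow (abs_nonneg _) habs_l (by linarith)
    have rt : |t| ^ p ≤ M ^ p := Real.rpow_le_rpow (abs_nonneg _) habs_t hp0.le
    have rl : |lam| ^ p ≤ M ^ p := Real.rpow_le_rpow (abs_nonneg _) habs_l hp0.le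
    have e1 : |gfun p c t| ≤ p * c * M ^ p := by
      rw [gfun, abs_of_nonneg (by positivity)]
      exact mul_le_mul_of_nonneg_left rt hpc.le
    have e2 : |gfun p c lam| ≤ p * c * M ^ p := by
      rw [gfun, abs_of_nonneg (by positivity)]
      exact mul_le_mul_of_nonneg_left rl hpc.le
    have e3 : |(t - lam) * (p * c * (p * |lam| ^ (p - 2) * lam))|
        ≤ 2 * M * (p * c * (p * M ^ (p - 2) * M)) := by
      rw [abs_mul]
      have habs : |p * c * (p * |lam| ^ (p - 2) * lam)|
          = p * c * (p * |lam| ^ (p - 2) * |lam|) := by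
        simp only [abs_mul, abs_of_pos hp0, abs_of_pos hc,
          abs_of_nonneg (Real.rpow_nonneg (abs_nonneg lam) (p - 2)), abs_abs]
      rw [habs]
      have hinner : p * |lam| ^ (p - 2) * |lam| ≤ p * M ^ (p - 2) * M := by
        have := mul_le_mul r2 habs_l (abs_nonneg _) (Real.rpow_pos_of_pos hM0 _).le
        calc p * |lam| ^ (p - 2) * |lam| = p * (|lam| ^ (p - 2) * |lam|) := by ring
        _ ≤ p * (M ^ (p - 2) * M) := mul_le_mul_of_nonneg_left this hp0.le
        _ = p * M ^ (p - 2) * M := by ring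
      exact mul_le_mul hh2M (mul_le_mul_of_nonneg_left hinner hpc.le) (by positivity)
        (by linarith)
    have e4 : |(t - lam) ^ 2 / 2 * (p * c * p * (p - 1) * |lam| ^ (p - 2))|
        ≤ (2 * M) ^ 2 / 2 * (p * c * p * (p - 1) * M ^ (p - 2)) := by
      rw [abs_of_nonneg (by positivity)]
      have hsq : (t - lam) ^ 2 / 2 ≤ (2 * M) ^ 2 / 2 := by
        have : (t - lam) ^ 2 ≤ (2 * M) ^ 2 := by
          rw [← sq_abs (t - lam)]
          exact pow_le_pow_left₀ (abs_nonneg _) hh2M 2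
        linarith
      exact mul_le_mul hsq (mul_le_mul_of_nonneg_left r2 hpcpp.le) (by positivity)
        (by positivity)
    have tri : |gfun p c t - gfun p c lam - (t - lam) * (p * c * (p * |lam| ^ (p - 2) * lam))
        - (t - lam) ^ 2 / 2 * (p * c * p * (p - 1) * |lam| ^ (p - 2))|
        ≤ |gfun p c t| + |gfun p c lam| + |(t - lam) * (p * c * (p * |lam| ^ (p - 2) * lam))|
          + |(t - lam) ^ 2 / 2 * (p * c * p * (p - 1) * |lam| ^ (p - 2))| := by
      calc _ ≤ |gfun p c t - gfun p c lam - (t - lam) * (p * c * (p * |lam| ^ (p - 2) * lam))|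
            + |(t - lam) ^ 2 / 2 * (p * c * p * (p - 1) * |lam| ^ (p - 2))| := abs_sub _ _
      _ ≤ |gfun p c t - gfun p c lam| + |(t - lam) * (p * c * (p * |lam| ^ (p - 2) * lam))|
            + |(t - lam) ^ 2 / 2 * (p * c * p * (p - 1) * |lam| ^ (p - 2))| := by
        have := abs_sub (gfun p c t - gfun p c lam)
          ((t - lam) * (p * c * (p * |lam| ^ (p - 2) * lam)))
        linarith
      _ ≤ _ := by
        have := abs_sub (gfun p c t) (gfun p c lam)
        linarith
    have hMrelp : M ^ p = M ^ (p - 3) * M * M * M := by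
      have h3 : M ^ ((3:ℝ)) = M * M * M := by
        rw [show (3:ℝ) = ((3:ℕ):ℝ) by norm_num, Real.rpow_natCast]; ring
      calc M ^ p = M ^ ((p - 3) + 3) := by congr 1; ring
      _ = M ^ (p - 3) * M ^ ((3:ℝ)) := Real.rpow_add hM0 _ _
      _ = M ^ (p - 3) * M * M * M := by rw [h3]; ring
    calc |gfun p c t - gfun p c lam - (t - lam) * (p * c * (p * |lam| ^ (p - 2) * lam))
        - (t - lam) ^ 2 / 2 * (p * c * p * (p - 1) * |lam| ^ (p - 2))|
        ≤ p * c * M ^ p + p * c * M ^ p + 2 * M * (p * c * (p * M ^ (p - 2) * M))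
          + (2 * M) ^ 2 / 2 * (p * c * p * (p - 1) * M ^ (p - 2)) := by linarith
    _ = A * (M * M * M) * M ^ (p - 3) := by rw [hMrel2, hMrelp, hAdef]; ring
    _ ≤ A * (8 * |t - lam| ^ 3) * M ^ (p - 3) := by
        have hM3 : M * M * M ≤ 8 * |t - lam| ^ 3 := by
          have h1 : M ^ 3 ≤ (2 * |t - lam|) ^ 3 := pow_le_pow_left₀ hM0.le hbig 3
          calc M * M * M = M ^ 3 := by ring
          _ ≤ (2 * |t - lam|) ^ 3 := h1
          _ = 8 * |t - lam| ^ 3 := by ring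
        exact mul_le_mul_of_nonneg_right (mul_le_mul_of_nonneg_left hM3 hA.le) hx3
    _ ≤ (8 * A + 2 * K) * |t - lam| ^ 3 * M ^ (p - 3) := by
        have hnn : (0:ℝ) ≤ 2 * K * |t - lam| ^ 3 * M ^ (p - 3) :=
          mul_nonneg (mul_nonneg (by linarith) hh3) hx3
        calc A * (8 * |t - lam| ^ 3) * M ^ (p - 3)
            = 8 * A * |t - lam| ^ 3 * M ^ (p - 3) := by ring
        _ ≤ 8 * A * |t - lam| ^ 3 * M ^ (p - 3) + 2 * K * |t - lam| ^ 3 * M ^ (p - 3) :=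
            le_add_of_nonneg_right hnn
        _ = (8 * A + 2 * K) * |t - lam| ^ 3 * M ^ (p - 3) := by ring
  · -- smooth case : 2|t - lam| < M, the segment stays away from 0
    have hKey : ∀ u ∈ Set.uIcc lam t, |u - lam| ≤ |t - lam| ∧ |u - t| ≤ |t - lam| := by
      intro u hu
      rcases le_total lam t with hlt | hlt
      · rw [Set.uIcc_of_le hlt] at hu
        have e : |t - lam| = t - lam := abs_of_nonneg (by linarith)
        constructor <;> rw [abs_le, e] <;> exact ⟨by linarith [hu.1, hu.2], by linarith [hu.1, hu.2]⟩
      · rw [Set.uIcc_of_ge hlt] at hu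
        have e : |t - lam| = -(t - lam) := abs_of_nonpos (by linarith)
        constructor <;> rw [abs_le, e] <;> exact ⟨by linarith [hu.1, hu.2], by linarith [hu.1, hu.2]⟩
    have hub : ∀ u ∈ Set.uIcc lam t, |u| ≤ M := by
      intro u hu
      rcases le_total lam t with hlt | hlt
      · rw [Set.uIcc_of_le hlt] at hu
        exact (abs_le_max_abs_abs hu.1 hu.2).trans (max_le habs_l habs_t)
      · rw [Set.uIcc_of_ge hlt] at hu
        exact (abs_le_max_abs_abs hu.1 hu.2).trans (max_le habs_t habs_l)
    have hlb : ∀ u ∈ Set.uIcc lam t, M / 2 ≤ |u| := by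
      intro u hu
      obtain ⟨k1, k2⟩ := hKey u hu
      have a1 : |lam| - |u| ≤ |t - lam| := by
        have := abs_sub_abs_le_abs_sub lam u
        have e : |lam - u| = |u - lam| := abs_sub_comm lam u
        linarith [this, e ▸ k1]
      have a2 : |t| - |u| ≤ |t - lam| := by
        have := abs_sub_abs_le_abs_sub t u
        have e : |t - u| = |u - t| := abs_sub_comm t u
        linarith [this, e ▸ k2]
      have : M ≤ |u| + |t - lam| := max_le (by linarith) (by linarith)
      linarith
    have hne0 : ∀ u ∈ Set.uIcc lam t, u ≠ 0 := by
      intro u hu h0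
      have := hlb u hu
      rw [h0, abs_zero] at this
      linarith
    -- uniform bound on |u| ^ (p - 3)
    have hbound3 : ∀ u ∈ Set.uIcc lam t, |u| ^ (p - 3) ≤ 2 * M ^ (p - 3) := by
      intro u hu
      have hu2 : M / 2 ≤ |u| := hlb u hu
      rcases le_or_gt 3 p with h3 | h3
      · calc |u| ^ (p - 3) ≤ M ^ (p - 3) :=
            Real.rpow_le_rpow (abs_nonneg u) (hub u hu) (by linarith)
        _ ≤ 2 * M ^ (p - 3) := by linarith
      · have hpos2 : (0:ℝ) < 2 ^ (p - 3) := Real.rpow_pos_of_pos (by norm_num) _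
        have h2p : (1:ℝ) / 2 ≤ 2 ^ (p - 3) := by
          have := Real.rpow_le_rpow_of_exponent_le (by norm_num : (1:ℝ) ≤ 2)
            (by linarith : (-1:ℝ) ≤ p - 3)
          rw [show ((-1:ℝ)) = -(1:ℝ) by norm_num, Real.rpow_neg (by norm_num), Real.rpow_one] at this
          linarith [this]
        have hinv2 : ((2:ℝ) ^ (p - 3))⁻¹ ≤ 2 := by
          have hmc : ((2:ℝ) ^ (p - 3))⁻¹ * (2 ^ (p - 3)) = 1 := inv_mul_cancel₀ hpos2.ne'
          nlinarith [mul_nonneg (inv_nonneg.2 hpos2.le) (by linarith : (0:ℝ) ≤ 2 ^ (p - 3) - 1 / 2)]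
        calc |u| ^ (p - 3) ≤ (M / 2) ^ (p - 3) :=
            Real.rpow_le_rpow_of_nonpos (by positivity) hu2 (by linarith)
        _ = M ^ (p - 3) / 2 ^ (p - 3) := Real.div_rpow hM0.le (by norm_num) _
        _ = M ^ (p - 3) * (2 ^ (p - 3))⁻¹ := by ring
        _ ≤ M ^ (p - 3) * 2 := mul_le_mul_of_nonneg_left hinv2 hx3
        _ = 2 * M ^ (p - 3) := by ring
    -- bound on the third derivative on the segment
    have hd3bound : ∀ u ∈ Set.uIcc lam t,
        ‖p * c * p * (p - 1) * ((p - 2) * |u| ^ (p - 4) * u)‖ ≤ K * (2 * M ^ (p - 3)) := by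
      intro u hu
      have hu0 : u ≠ 0 := hne0 u hu
      have habsne : |u| ≠ 0 := abs_ne_zero.2 hu0
      rw [Real.norm_eq_abs]
      have e0 : p * c * p * (p - 1) * ((p - 2) * |u| ^ (p - 4) * u)
          = K * (|u| ^ (p - 4) * u) := by rw [hKdef]; ring
      have e1 : |K * (|u| ^ (p - 4) * u)| = K * (|u| ^ (p - 4) * |u|) := by
        rw [abs_mul, abs_of_pos hK, abs_mul,
          abs_of_nonneg (Real.rpow_nonneg (abs_nonneg u) _)]
      have e2 : |u| ^ (p - 4) * |u| = |u| ^ (p - 3) := by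
        calc |u| ^ (p - 4) * |u| = |u| ^ ((p - 4) + 1) := (Real.rpow_add_one habsne _).symm
        _ = |u| ^ (p - 3) := by congr 1; ring
      rw [e0, e1, e2]
      exact mul_le_mul_of_nonneg_left (hbound3 u hu) hK.le
    have hB3 : (0:ℝ) ≤ K * (2 * M ^ (p - 3)) := by positivity
    -- first MVT : second derivative is Lipschitz on the segment
    have mvt1 : ∀ u ∈ Set.uIcc lam t,
        |p * c * p * (p - 1) * |u| ^ (p - 2) - p * c * p * (p - 1) * |lam| ^ (p - 2)|
          ≤ K * (2 * M ^ (p - 3)) * |t - lam| := by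
      intro u hu
      have key := Convex.norm_image_sub_le_of_norm_hasDerivWithin_le
        (f := fun y : ℝ => p * c * p * (p - 1) * |y| ^ (p - 2))
        (f' := fun y : ℝ => p * c * p * (p - 1) * ((p - 2) * |y| ^ (p - 4) * y))
        (fun y hy => (hd3 y (hne0 y hy)).hasDerivWithinAt) hd3bound
        (convex_uIcc lam t) Set.left_mem_uIcc hu
      rw [Real.norm_eq_abs, Real.norm_eq_abs] at key
      calc |p * c * p * (p - 1) * |u| ^ (p - 2) - p * c * p * (p - 1) * |lam| ^ (p - 2)|
          ≤ K * (2 * M ^ (p - 3)) * |u - lam| := key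
      _ ≤ K * (2 * M ^ (p - 3)) * |t - lam| :=
          mul_le_mul_of_nonneg_left (hKey u hu).1 hB3
    -- second MVT : first-order Taylor remainder of the first derivative
    have mvt2 : ∀ u ∈ Set.uIcc lam t,
        |p * c * (p * |u| ^ (p - 2) * u) - p * c * (p * |lam| ^ (p - 2) * lam)
          - (u - lam) * (p * c * p * (p - 1) * |lam| ^ (p - 2))|
          ≤ K * (2 * M ^ (p - 3)) * |t - lam| * |t - lam| := by
      intro u hu
      have hder : ∀ y ∈ Set.uIcc lam t, HasDerivWithinAt
          (fun y : ℝ => p * c * (p * |y| ^ (p - 2) * y) - p * c * (p * |lam| ^ (p - 2) * lam)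
            - (y - lam) * (p * c * p * (p - 1) * |lam| ^ (p - 2)))
          (p * c * p * (p - 1) * |y| ^ (p - 2) - p * c * p * (p - 1) * |lam| ^ (p - 2))
          (Set.uIcc lam t) y := by
        intro y hy
        have h1 := (hd2 y).sub_const (p * c * (p * |lam| ^ (p - 2) * lam))
        have h2 : HasDerivAt (fun y : ℝ => (y - lam) * (p * c * p * (p - 1) * |lam| ^ (p - 2)))
            (p * c * p * (p - 1) * |lam| ^ (p - 2)) y := by
          simpa using ((hasDerivAt_id y).sub_const lam).mul_const
            (p * c * p * (p - 1) * |lam| ^ (p - 2))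
        exact ((h1.sub h2)).hasDerivWithinAt
      have key := Convex.norm_image_sub_le_of_norm_hasDerivWithin_le
        (f' := fun y : ℝ => p * c * p * (p - 1) * |y| ^ (p - 2)
          - p * c * p * (p - 1) * |lam| ^ (p - 2)) hder
        (fun y hy => by rw [Real.norm_eq_abs]; exact mvt1 y hy)
        (convex_uIcc lam t) Set.left_mem_uIcc hu
      rw [Real.norm_eq_abs, Real.norm_eq_abs] at key
      simp only [sub_self, zero_mul, mul_zero, sub_zero] at key
      calc |p * c * (p * |u| ^ (p - 2) * u) - p * c * (p * |lam| ^ (p - 2) * lam)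
          - (u - lam) * (p * c * p * (p - 1) * |lam| ^ (p - 2))|
          ≤ K * (2 * M ^ (p - 3)) * |t - lam| * |u - lam| := key
      _ ≤ K * (2 * M ^ (p - 3)) * |t - lam| * |t - lam| :=
          mul_le_mul_of_nonneg_left (hKey u hu).1 (by positivity)
    -- third MVT : the full Taylor remainder
    have hder : ∀ y ∈ Set.uIcc lam t, HasDerivWithinAt
        (fun y : ℝ => gfun p c y - gfun p c lam - (y - lam) * (p * c * (p * |lam| ^ (p - 2) * lam))
          - (y - lam) ^ 2 / 2 * (p * c * p * (p - 1) * |lam| ^ (p - 2)))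
        (p * c * (p * |y| ^ (p - 2) * y) - p * c * (p * |lam| ^ (p - 2) * lam)
          - (y - lam) * (p * c * p * (p - 1) * |lam| ^ (p - 2))) (Set.uIcc lam t) y := by
      intro y hy
      have h1 := (hd1 y).sub_const (gfun p c lam)
      have h2 : HasDerivAt (fun y : ℝ => (y - lam) * (p * c * (p * |lam| ^ (p - 2) * lam)))
          (p * c * (p * |lam| ^ (p - 2) * lam)) y := by
        simpa using ((hasDerivAt_id y).sub_const lam).mul_const
          (p * c * (p * |lam| ^ (p - 2) * lam))
      have h3 : HasDerivAt (fun y : ℝ => (y - lam) ^ 2 / 2 * (p * c * p * (p - 1) * |lam| ^ (p - 2)))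
          ((y - lam) * (p * c * p * (p - 1) * |lam| ^ (p - 2))) y := by
        have hsq : HasDerivAt (fun y : ℝ => (y - lam) ^ 2) (2 * (y - lam)) y := by
          refine (((hasDerivAt_id y).sub_const lam).pow 2).congr_deriv ?_
          simp only [id, Nat.cast_ofNat]
          ring
        have := (hsq.div_const 2).mul_const (p * c * p * (p - 1) * |lam| ^ (p - 2))
        refine this.congr_deriv ?_
        ring
      have htot := (h1.sub h2).sub h3
      exact htot.hasDerivWithinAt
    have final := Convex.norm_image_sub_le_of_norm_hasDerivWithin_le
      (f' := fun y : ℝ => p * c * (p * |y| ^ (p - 2) * y) - p * c * (p * |lam| ^ (p - 2) * lam)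
        - (y - lam) * (p * c * p * (p - 1) * |lam| ^ (p - 2))) hder
      (fun y hy => by rw [Real.norm_eq_abs]; exact mvt2 y hy)
      (convex_uIcc lam t) Set.left_mem_uIcc Set.right_mem_uIcc
    rw [Real.norm_eq_abs, Real.norm_eq_abs] at final
    simp only [sub_self, zero_mul, mul_zero, sub_zero, ne_eq, OfNat.ofNat_ne_zero,
      not_false_eq_true, zero_pow, zero_div] at final
    calc |gfun p c t - gfun p c lam - (t - lam) * (p * c * (p * |lam| ^ (p - 2) * lam))
        - (t - lam) ^ 2 / 2 * (p * c * p * (p - 1) * |lam| ^ (p - 2))|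
        ≤ K * (2 * M ^ (p - 3)) * |t - lam| * |t - lam| * |t - lam| := final
    _ = 2 * K * |t - lam| ^ 3 * M ^ (p - 3) := by ring
    _ ≤ (8 * A + 2 * K) * |t - lam| ^ 3 * M ^ (p - 3) := by
        have hnn : (0:ℝ) ≤ 8 * A * |t - lam| ^ 3 * M ^ (p - 3) :=
          mul_nonneg (mul_nonneg (by linarith) hh3) hx3
        calc 2 * K * |t - lam| ^ 3 * M ^ (p - 3)
            ≤ 2 * K * |t - lam| ^ 3 * M ^ (p - 3) + 8 * A * |t - lam| ^ 3 * M ^ (p - 3) :=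
            le_add_of_nonneg_right hnn
        _ = (8 * A + 2 * K) * |t - lam| ^ 3 * M ^ (p - 3) := by ring
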